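/- For every nonnegative integer N and parameters a, e (generic): Σ_{m=0}^{N} (a)_m ((1-N)/2)_m (-N/2)_m / (m! (e)_m (1-N-e)_m) = 2^{-N} (e-a)_N/(e)_N · Σ_{s=0}^{N} (1-a-e-N)_s (-N)_s (-1)^s / (s! (1+a-e-N)_s). -/

import Mathlib

open Finset

noncomputable def poch (x : ℝ) (m : ℕ) : ℝ := (ascPochhammer ℝ m).eval x

@[simp] lemma poch_zero (x : ℝ) : poch x 0 = 1 := by simp [poch]

lemma poch_succ_right (x : ℝ) (n : ℕ) : poch x (n+1) = poch x n * (x + n) := by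
  simp [poch, ascPochhammer_succ_right]

lemma poch_succ_left (x : ℝ) (n : ℕ) : poch x (n+1) = x * poch (x+1) n := by
  simp [poch, ascPochhammer_succ_left, Polynomial.eval_comp]

lemma poch_add (x : ℝ) (n m : ℕ) : poch x (n+m) = poch x n * poch (x+n) m := by
  simp [poch, ← ascPochhammer_mul, Polynomial.eval_comp]

lemma poch_reflect (x : ℝ) (m : ℕ) : poch x m = (-1)^m * poch (-x - m + 1) m := by
  induction m generalizing x with
  | zero => simp
  | succ m ih =>
    have h1 : (-x - ((m:ℕ)+1 : ℝ) + 1) = -x - m := by push_cast; ring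
    rw [poch_succ_right, ih, show ((m+1 : ℕ) : ℝ) = ((m:ℕ):ℝ)+1 by push_cast; ring, h1,
      poch_succ_left]
    ring

lemma poch_neg_nat (N k : ℕ) : poch (-(N:ℝ)) k = (-1)^k * (N.choose k) * k.factorial := by
  induction k with
  | zero => simp
  | succ k ih =>
    rw [poch_succ_right, ih]
    have key : ((N.choose k : ℝ)) * ((N:ℝ) - k) = (N.choose (k+1)) * (k+1) := by
      rcases le_or_gt k N with h | h
      · have := Nat.choose_succ_right_eq N k
        have hc : ((N.choose (k+1) * (k+1) : ℕ) : ℝ) = ((N.choose k * (N - k) : ℕ) : ℝ) := by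
          rw [this]
        push_cast [Nat.cast_sub h] at hc
        linarith [hc]
      · rw [Nat.choose_eq_zero_of_lt h, Nat.choose_eq_zero_of_lt (by omega)]
        simp
    push_cast [Nat.factorial_succ]
    linear_combination (-(-1:ℝ)^k * (k.factorial:ℝ)) * key

noncomputable def gt (N : ℕ) (a e : ℝ) (m : ℕ) : ℝ :=
  (-1)^m * poch a m * poch (e+m) (N-2*m) * 2^(N-2*m) *
    ((N.choose (2*m) : ℝ) * ((2*m).choose m : ℝ) * (m.factorial : ℝ))

noncomputable def gH (N : ℕ) (a e : ℝ) (m : ℕ) : ℝ :=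
  if m = 0 then 0 else
  (-1)^(m-1) * 2 * poch a m * poch (e+m) (N+1-2*m) * 2^(N+1-2*m) *
    ((N.choose (2*m-1) : ℝ) * ((2*m-1).choose m : ℝ) * (m.factorial : ℝ))

lemma choose_central (m : ℕ) (hm : 1 ≤ m) :
    (2*m).choose m = 2 * ((2*m-1).choose m) := by
  obtain ⟨j, rfl⟩ : ∃ j, m = j+1 := ⟨m-1, by omega⟩
  rw [show 2*(j+1) = (2*j+1)+1 by omega, show (2*j+1)+1-1 = 2*j+1 by omega,
    Nat.choose_succ_succ]
  have h := Nat.choose_symm (show j ≤ 2*j+1 by omega)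
  rw [show 2*j+1-j = j+1 by omega] at h
  simp only [Nat.succ_eq_add_one]
  omega

lemma poch_dup (x : ℝ) (m : ℕ) : 4^m * (poch (x/2) m * poch ((x+1)/2) m) = poch x (2*m) := by
  induction m with
  | zero => simp
  | succ m ih =>
    have h2 : 2*(m+1) = (2*m+1)+1 := by ring
    rw [h2, poch_succ_right, poch_succ_right, poch_succ_right, poch_succ_right, ← ih]
    push_cast
    ring

lemma poch_one (x : ℝ) : poch x 1 = x := by
  rw [show (1:ℕ) = 0+1 from rfl, poch_succ_right]; simp

lemma gterm_rec (N : ℕ) (a e : ℝ) (m : ℕ) :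
    gt (N+1) a e m - (a+e+N) * gt N a e m - (e-a) * gt N a (e+1) m
      = gH N a e (m+1) - gH N a e m := by
  rcases Nat.lt_or_ge (N+1) (2*m) with hA | hr
  · -- case A : 2m ≥ N+2, everything vanishes
    have z1 : (N+1).choose (2*m) = 0 := Nat.choose_eq_zero_of_lt (by omega)
    have z2 : N.choose (2*m) = 0 := Nat.choose_eq_zero_of_lt (by omega)
    have z3 : N.choose (2*(m+1)-1) = 0 := Nat.choose_eq_zero_of_lt (by omega)
    have z4 : N.choose (2*m-1) = 0 := Nat.choose_eq_zero_of_lt (by omega)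
    simp [gt, gH, z1, z2, z3, z4]
  rcases Nat.eq_or_lt_of_le hr with hB | hr2
  · -- case B : 2m = N+1
    obtain ⟨j, rfl⟩ : ∃ j, m = j+1 := ⟨m-1, by omega⟩
    obtain rfl : N = 2*j+1 := by omega
    have z2 : (2*j+1).choose (2*(j+1)) = 0 := Nat.choose_eq_zero_of_lt (by omega)
    have z3 : (2*j+1).choose (2*(j+1+1)-1) = 0 := Nat.choose_eq_zero_of_lt (by omega)
    have hc : ((2*(j+1)).choose (j+1) : ℝ) = 2 * ((2*j+1).choose (j+1) : ℝ) := by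
      have h := choose_central (j+1) (by omega)
      rw [show 2*(j+1)-1 = 2*j+1 by omega] at h
      exact_mod_cast h
    have s1 : 2*j+1+1-2*(j+1) = 0 := by omega
    have s2 : (2*j+1).choose (2*(j+1)-1) = 1 := by
      rw [show 2*(j+1)-1 = 2*j+1 by omega]; exact Nat.choose_self _
    have s3 : j+1-1 = j := by omega
    have s4 : j+1+1-1 = j+1 := by omega
    have s5 : 2*j+1+1-2*(j+1+1) = 0 := by omega
    have s6 : (2*j+1+1).choose (2*(j+1)) = 1 := by
      rw [show 2*(j+1) = 2*j+1+1 by omega]; exact Nat.choose_self _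
    have s7 : 2*(j+1)-1 = 2*j+1 := by omega
    have s8 : (2*j+1).choose (2*j+1) = 1 := Nat.choose_self _
    simp only [gt, gH, if_neg (by omega : ¬ j+1 = 0), if_neg (by omega : ¬ j+1+1 = 0),
      s1, s2, s3, s4, s5, s6, s7, s8, z2, z3]
    push_cast
    rw [hc]
    ring
  rcases Nat.eq_or_lt_of_le (show 2*m ≤ N by omega) with hC | hD
  · -- case C : 2m = N
    obtain rfl : N = 2*m := hC.symm
    rcases Nat.eq_zero_or_pos m with rfl | hm
    · -- m = 0, N = 0
      norm_num [gt, gH, poch_one]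
      ring
    · have hc : ((2*m).choose m : ℝ) = 2 * ((2*m-1).choose m : ℝ) := by
        exact_mod_cast congrArg (Nat.cast (R := ℝ)) (choose_central m hm)
      have hsign : ((-1:ℝ))^m = -((-1:ℝ))^(m-1) := by
        conv_lhs => rw [show m = (m-1)+1 by omega]
        rw [pow_succ]; ring
      have s1 : 2*m+1-2*m = 1 := by omega
      have s2 : (2*m+1).choose (2*m) = 2*m+1 := by
        have h := Nat.choose_symm (show 1 ≤ 2*m+1 by omega)
        rw [show 2*m+1-1 = 2*m by omega, Nat.choose_one_right] at h
        exact h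
      have s3 : 2*m-2*m = 0 := by omega
      have s4 : (2*m).choose (2*(m+1)-1) = 0 := Nat.choose_eq_zero_of_lt (by omega)
      have s5 : (2*m).choose (2*m-1) = 2*m := by
        have h := Nat.choose_symm (show 2*m-1 ≤ 2*m by omega)
        rw [show 2*m-(2*m-1) = 1 by omega, Nat.choose_one_right] at h
        exact h.symm
      have s6 : 2*m+1-2*(m+1) = 0 := by omega
      simp only [gt, gH, if_neg (by omega : ¬ m = 0), if_neg (by omega : ¬ m+1 = 0),
        s1, s2, s3, s4, s5, s6, poch_zero, poch_one, pow_zero, pow_one, Nat.choose_self]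
      push_cast
      rw [hc, hsign]
      ring
  · -- case D : 2m+1 ≤ N
    obtain ⟨k, rfl⟩ : ∃ k, N = 2*m+1+k := ⟨N-(2*m+1), by omega⟩
    have hk2 : ((k:ℝ)+2) ≠ 0 := by positivity
    have hm1 : ((m:ℝ)+1) ≠ 0 := by positivity
    have h2m1 : (2*(m:ℝ)+1) ≠ 0 := by positivity
    -- index normalizations
    have s1 : 2*m+1+k+1-2*m = k+2 := by omega
    have s2 : 2*m+1+k-2*m = k+1 := by omega
    have s3 : 2*m+1+k+1-2*(m+1) = k := by omega
    have s4 : 2*(m+1)-1 = 2*m+1 := by omega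
    have s5 : m+1-1 = m := by omega
    -- poch normalizations
    have pp1 : poch (e+(m:ℝ)) (k+2) = (e+(m:ℝ)) * poch (e+(m:ℝ)+1) k * (e+(m:ℝ)+1+(k:ℝ)) := by
      rw [show k+2 = (k+1)+1 from rfl, poch_succ_right, poch_succ_left]
      push_cast; ring
    have pp2 : poch (e+(m:ℝ)) (k+1) = (e+(m:ℝ)) * poch (e+(m:ℝ)+1) k :=
      poch_succ_left _ _
    have pp3 : poch (e+1+(m:ℝ)) (k+1) = poch (e+(m:ℝ)+1) k * (e+(m:ℝ)+1+(k:ℝ)) := by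
      rw [show e+1+(m:ℝ) = e+(m:ℝ)+1 by ring, poch_succ_right]
    have pp4 : e+((m+1:ℕ):ℝ) = e+(m:ℝ)+1 := by push_cast; ring
    have pp5 : poch a (m+1) = poch a m * (a+(m:ℝ)) := poch_succ_right _ _
    -- choose relations
    have hF1 := Nat.choose_mul_succ_eq (2*m+1+k) (2*m)
    rw [show 2*m+1+k+1-2*m = k+2 by omega] at hF1
    have hF1' := congrArg (Nat.cast (R := ℝ)) hF1
    push_cast at hF1'
    have F1 : (((2*m+1+k+1).choose (2*m) : ℕ) : ℝ)
        = (2*(m:ℝ)+2+(k:ℝ)) * ((2*m+1+k).choose (2*m) : ℝ) / ((k:ℝ)+2) := by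
      rw [eq_div_iff hk2]; linear_combination -hF1'
    have hF2a := Nat.choose_succ_right_eq (2*m+1+k) (2*m)
    rw [show 2*m+1+k-2*m = k+1 by omega] at hF2a
    have hF2a' := congrArg (Nat.cast (R := ℝ)) hF2a
    push_cast at hF2a'
    have F2a : (((2*m+1+k).choose (2*m+1) : ℕ) : ℝ)
        = ((2*m+1+k).choose (2*m) : ℝ) * ((k:ℝ)+1) / (2*(m:ℝ)+1) := by
      rw [eq_div_iff h2m1]; linear_combination hF2a'
    have hF2b := Nat.add_one_mul_choose_eq (2*m) m
    have hF2b' := congrArg (Nat.cast (R := ℝ)) hF2b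
    push_cast at hF2b'
    have F2b : (((2*m+1).choose (m+1) : ℕ) : ℝ)
        = (2*(m:ℝ)+1) * ((2*m).choose m : ℝ) / ((m:ℝ)+1) := by
      rw [eq_div_iff hm1]; linear_combination -hF2b'
    rcases Nat.eq_zero_or_pos m with rfl | hm
    · -- m = 0 subcase
      simp only [gt, gH, if_pos rfl, if_neg (by omega : ¬ (0:ℕ)+1 = 0), s1, s2, s3, s4, s5,
        pp1, pp2, pp3, pp4, pp5]
      rw [F1, F2a, F2b]
      push_cast [Nat.factorial_succ]
      field_simp
      ring
    · have hsign : ((-1:ℝ))^m = -((-1:ℝ))^(m-1) := by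
        conv_lhs => rw [show m = (m-1)+1 by omega]
        rw [pow_succ]; ring
      have hc : ((2*m).choose m : ℝ) = 2 * ((2*m-1).choose m : ℝ) := by
        exact_mod_cast congrArg (Nat.cast (R := ℝ)) (choose_central m hm)
      have F3b : (((2*m-1).choose m : ℕ) : ℝ) = ((2*m).choose m : ℝ) / 2 := by
        rw [hc]; ring
      have hF3a := Nat.choose_succ_right_eq (2*m+1+k) (2*m-1)
      rw [show (2*m-1)+1 = 2*m by omega, show 2*m+1+k-(2*m-1) = k+2 by omega] at hF3a
      have hF3a' := congrArg (Nat.cast (R := ℝ)) hF3a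
      push_cast [Nat.cast_sub (show 1 ≤ 2*m by omega)] at hF3a'
      have F3a : (((2*m+1+k).choose (2*m-1) : ℕ) : ℝ)
          = ((2*m+1+k).choose (2*m) : ℝ) * (2*(m:ℝ)) / ((k:ℝ)+2) := by
        rw [eq_div_iff hk2]; linear_combination -hF3a'
      simp only [gt, gH, if_neg (by omega : ¬ m = 0), if_neg (by omega : ¬ m+1 = 0),
        s1, s2, s3, s4, s5, pp1, pp2, pp3, pp4, pp5]
      rw [F1, F2a, F2b, F3a, F3b, hsign]
      push_cast [Nat.factorial_succ]
      field_simp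
      ring

noncomputable def gsum (N : ℕ) (a e : ℝ) : ℝ := ∑ m ∈ Finset.range (N+1), gt N a e m

noncomputable def fsum (N : ℕ) (a e : ℝ) : ℝ :=
  ∑ s ∈ Finset.range (N+1), (N.choose s : ℝ) * poch (a+e+N-s) s * poch (e-a) (N-s)

lemma frec (N : ℕ) (a e : ℝ) :
    fsum (N+1) a e = (a+e+N) * fsum N a e + (e-a) * fsum N a (e+1) := by
  unfold fsum
  rw [Finset.sum_range_succ']
  have hsplit : ∀ i ∈ Finset.range (N+1),
      ((N+1).choose (i+1) : ℝ) * poch (a+e+(N+1:ℕ)-(i+1:ℕ)) (i+1) * poch (e-a) (N+1-(i+1))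
      = (a+e+N) * ((N.choose i : ℝ) * poch (a+e+N-i) i * poch (e-a) (N-i))
        + (N.choose (i+1) : ℝ) * poch (a+e+N-i) (i+1) * poch (e-a) (N-i) := by
    intro i hi
    have h1 : (a+e+((N:ℕ)+1:ℕ)-((i+1:ℕ):ℝ)) = a+e+(N:ℝ)-i := by push_cast; ring
    have h2 : N+1-(i+1) = N-i := by omega
    rw [h1, h2, Nat.choose_succ_succ, poch_succ_right]
    push_cast
    ring
  rw [Finset.sum_congr rfl hsplit, Finset.sum_add_distrib, ← Finset.mul_sum]
  have hB : ∑ i ∈ Finset.range (N+1),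
        (N.choose (i+1) : ℝ) * poch (a+e+N-i) (i+1) * poch (e-a) (N-i)
      = ∑ i ∈ Finset.range N,
        (N.choose (i+1) : ℝ) * poch (a+e+N-i) (i+1) * poch (e-a) (N-i) := by
    rw [Finset.sum_range_succ, Nat.choose_succ_self]
    simp
  have hC : (e-a) * ∑ s ∈ Finset.range (N+1),
        (N.choose s : ℝ) * poch (a+(e+1)+(N:ℝ)-s) s * poch (e+1-a) (N-s)
      = poch (e-a) (N+1-0) + ∑ i ∈ Finset.range N,
        (N.choose (i+1) : ℝ) * poch (a+e+N-i) (i+1) * poch (e-a) (N-i) := by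
    rw [Finset.mul_sum, Finset.sum_range_succ']
    have hterm : ∀ i ∈ Finset.range N,
        (e-a) * ((N.choose (i+1) : ℝ) * poch (a+(e+1)+(N:ℝ)-(i+1:ℕ)) (i+1) * poch (e+1-a) (N-(i+1)))
        = (N.choose (i+1) : ℝ) * poch (a+e+N-i) (i+1) * poch (e-a) (N-i) := by
      intro i hi
      simp only [Finset.mem_range] at hi
      have h1 : (a+(e+1)+(N:ℝ)-((i+1:ℕ):ℝ)) = a+e+(N:ℝ)-i := by push_cast; ring
      have h2 : N-i = (N-(i+1))+1 := by omega
      have h4 : poch (e-a) ((N-(i+1))+1) = (e-a) * poch (e+1-a) (N-(i+1)) := by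
        rw [poch_succ_left, show (e-a+1) = (e+1)-a from by ring]
      rw [h1, h2, h4]
      ring
    rw [Finset.sum_congr rfl hterm]
    have h0 : (e-a) * ((N.choose 0 : ℝ) * poch (a+(e+1)+(N:ℝ)-((0:ℕ):ℝ)) 0 * poch (e+1-a) (N-0))
        = poch (e-a) (N+1-0) := by
      have h5 : N+1-0 = (N-0)+1 := by omega
      rw [h5, poch_succ_left, show (e-a+1) = (e+1)-a from by ring]
      simp
    rw [h0]
    ring
  rw [hB, hC]
  simp
  ring


lemma grec (N : ℕ) (a e : ℝ) :
    gsum (N+1) a e = (a+e+N) * gsum N a e + (e-a) * gsum N a (e+1) := by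
  have hext : ∀ (e' : ℝ), ∑ m ∈ Finset.range (N+2), gt N a e' m = gsum N a e' := by
    intro e'
    rw [gsum, Finset.sum_range_succ]
    have hz : gt N a e' (N+1) = 0 := by
      simp [gt, Nat.choose_eq_zero_of_lt (show N < 2*(N+1) by omega)]
    rw [hz, add_zero]
  have tel : ∑ m ∈ Finset.range (N+2), (gH N a e (m+1) - gH N a e m)
      = gH N a e (N+2) - gH N a e 0 := Finset.sum_range_sub (gH N a e) (N+2)
  have hH0 : gH N a e 0 = 0 := by simp [gH]
  have hHtop : gH N a e (N+2) = 0 := by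
    simp [gH, Nat.choose_eq_zero_of_lt (show N < 2*(N+2)-1 by omega)]
  have key : gsum (N+1) a e - (a+e+N) * gsum N a e - (e-a) * gsum N a (e+1)
      = ∑ m ∈ Finset.range (N+2),
          (gt (N+1) a e m - (a+e+N) * gt N a e m - (e-a) * gt N a (e+1) m) := by
    rw [Finset.sum_sub_distrib, Finset.sum_sub_distrib, ← Finset.mul_sum, ← Finset.mul_sum,
      hext e, hext (e+1)]
    rfl
  rw [Finset.sum_congr rfl (fun m _ => gterm_rec N a e m), tel, hH0, hHtop] at key
  linarith [key]

lemma gfeq (N : ℕ) : ∀ a e : ℝ, gsum N a e = fsum N a e := by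
  induction N with
  | zero =>
    intro a e
    simp [gsum, fsum, gt]
  | succ N ih =>
    intro a e
    rw [grec, frec, ih a e, ih a (e+1)]

lemma term_lhs (N : ℕ) (a e : ℝ) (m : ℕ) (hm : m ≤ N)
    (heN : poch e N ≠ 0) (hem : poch e m ≠ 0) (hpn : poch (1 - N - e) m ≠ 0) :
    poch a m * poch ((1 - (N : ℝ)) / 2) m * poch (-(N : ℝ) / 2) m /
      ((Nat.factorial m) * poch e m * poch (1 - N - e) m)
    = ((2:ℝ)^N)⁻¹ / poch e N * gt N a e m := by
  -- duplication + negation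
  have hdup := poch_dup (-(N:ℝ)) m
  have ha1 : (-(N:ℝ))/2 = -(N:ℝ)/2 := by ring
  have ha2 : ((-(N:ℝ))+1)/2 = (1-(N:ℝ))/2 := by ring
  rw [ha1, ha2] at hdup
  have hneg := poch_neg_nat N (2*m)
  have hsq2 : ((-1:ℝ))^(2*m) = 1 := by rw [pow_mul]; norm_num
  rw [hsq2, one_mul] at hneg
  have hprod : poch ((1-(N:ℝ))/2) m * poch (-(N:ℝ)/2) m
      = (N.choose (2*m) : ℝ) * ((2*m).factorial : ℝ) / 4^m := by
    rw [eq_div_iff (by positivity : ((4:ℝ)^m) ≠ 0), ← hneg, ← hdup]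
    ring
  rcases Nat.lt_or_ge N (2*m) with hNm | hNm
  · have hz : N.choose (2*m) = 0 := Nat.choose_eq_zero_of_lt hNm
    rw [mul_assoc (poch a m), hprod, hz]
    simp [gt, hz]
  · -- reflection
    have hrefl := poch_reflect (1-(N:ℝ)-e) m
    have harg : (-(1-(N:ℝ)-e)-(m:ℝ)+1) = e + ((N:ℝ) - (m:ℝ)) := by ring
    rw [harg] at hrefl
    have hsplit1 : poch e N = poch e (N-m) * poch (e + ((N:ℝ)-(m:ℝ))) m := by
      conv_lhs => rw [show N = (N-m)+m by omega]
      rw [poch_add, Nat.cast_sub hm]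
    have hsplit2 : poch e (N-m) = poch e m * poch (e+(m:ℝ)) (N-2*m) := by
      conv_lhs => rw [show N-m = m+(N-2*m) by omega]
      exact poch_add e m (N-2*m)
    have hfact : ((2*m).factorial : ℝ) = ((2*m).choose m : ℝ) * m.factorial * m.factorial := by
      have h := Nat.choose_mul_factorial_mul_factorial (show m ≤ 2*m by omega)
      rw [show 2*m-m = m by omega] at h
      exact_mod_cast h.symm
    have hpow : (2:ℝ)^N = 2^(N-2*m) * 4^m := by
      rw [show N = (N-2*m)+2*m by omega, pow_add, pow_mul]
      norm_num
    have hsg : ((-1:ℝ))^m = 1 ∨ ((-1:ℝ))^m = -1 := by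
      rcases Nat.even_or_odd m with h | h
      · exact Or.inl (Even.neg_one_pow h)
      · exact Or.inr (Odd.neg_one_pow h)
    have hprodne : poch e m * poch (e+(m:ℝ)) (N-2*m) * poch (e + ((N:ℝ)-(m:ℝ))) m ≠ 0 := by
      rw [← hsplit2, ← hsplit1]; exact heN
    have hXne : poch (e+(m:ℝ)) (N-2*m) ≠ 0 := by
      intro h; rw [h] at hprodne; simp at hprodne
    have hYne : poch (e + ((N:ℝ)-(m:ℝ))) m ≠ 0 := by
      intro h; rw [h] at hprodne; simp at hprodne
    have hfm : ((m.factorial : ℕ) : ℝ) ≠ 0 := by positivity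
    have h4m : ((4:ℝ)^m) ≠ 0 := by positivity
    have h2k : ((2:ℝ)^(N-2*m)) ≠ 0 := by positivity
    rcases hsg with hsg | hsg <;>
    · rw [hsg] at hrefl
      simp only [gt]
      rw [mul_assoc (poch a m), hprod, hfact, hpow, hsplit1, hsplit2, hsg, hrefl]
      field_simp

lemma term_rhs (N : ℕ) (a e : ℝ) (s : ℕ) (hs : s ≤ N)
    (heN : poch e N ≠ 0) (hD : poch (1 + a - e - N) s ≠ 0) :
    (2 : ℝ) ^ (-(N : ℤ)) * poch (e - a) N / poch e N *
      (poch (1 - a - e - N) s * poch (-(N : ℝ)) s * (-1) ^ s /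
        ((Nat.factorial s) * poch (1 + a - e - N) s))
    = ((2:ℝ)^N)⁻¹ / poch e N *
        ((N.choose s : ℝ) * poch (a+e+(N:ℝ)-s) s * poch (e-a) (N-s)) := by
  have h2N : (2:ℝ)^(-(N:ℤ)) = ((2:ℝ)^N)⁻¹ := by rw [zpow_neg, zpow_natCast]
  have hEa0 := poch_reflect (1-a-e-(N:ℝ)) s
  have harg1 : (-(1-a-e-(N:ℝ))-(s:ℝ)+1) = a+e+(N:ℝ)-s := by ring
  rw [harg1] at hEa0
  have hEc0 := poch_reflect (1+a-e-(N:ℝ)) s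
  have harg2 : (-(1+a-e-(N:ℝ))-(s:ℝ)+1) = e-a + ((N:ℝ)-(s:ℝ)) := by ring
  rw [harg2] at hEc0
  have hEd : poch (e-a) N = poch (e-a) (N-s) * poch (e-a + ((N:ℝ)-(s:ℝ))) s := by
    conv_lhs => rw [show N = (N-s)+s by omega]
    rw [poch_add, Nat.cast_sub hs]
  have hEb := poch_neg_nat N s
  have hfs : ((s.factorial : ℕ) : ℝ) ≠ 0 := by positivity
  have hsg : ((-1:ℝ))^s = 1 ∨ ((-1:ℝ))^s = -1 := by
    rcases Nat.even_or_odd s with h | h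
    · exact Or.inl (Even.neg_one_pow h)
    · exact Or.inr (Odd.neg_one_pow h)
  rcases hsg with hsg | hsg <;>
  · rw [hsg] at hEa0 hEc0 hEb
    have hR : poch (e-a + ((N:ℝ)-(s:ℝ))) s ≠ 0 := by
      rw [hEc0] at hD
      intro h
      rw [h] at hD
      simp at hD
    rw [h2N, hEa0, hEd, hEb, hEc0, hsg]
    field_simp

/-- Lemma A.3: the `₃F₂(1)` to `₂F₁(-1)` transformation. -/
theorem stmt_11 (N : ℕ) (a e : ℝ)
    (he : ∀ m : ℕ, m ≤ N → poch e m ≠ 0)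
    (he' : ∀ m : ℕ, m ≤ N → poch (1 - N - e) m ≠ 0)
    (he'' : ∀ s : ℕ, s ≤ N → poch (1 + a - e - N) s ≠ 0) :
    ∑ m ∈ Finset.range (N + 1),
        poch a m * poch ((1 - (N : ℝ)) / 2) m * poch (-(N : ℝ) / 2) m /
          ((Nat.factorial m) * poch e m * poch (1 - N - e) m) =
      (2 : ℝ) ^ (-(N : ℤ)) * poch (e - a) N / poch e N *
        ∑ s ∈ Finset.range (N + 1),
          poch (1 - a - e - N) s * poch (-(N : ℝ)) s * (-1) ^ s /
            ((Nat.factorial s) * poch (1 + a - e - N) s) := by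
  have heN : poch e N ≠ 0 := he N le_rfl
  calc
    ∑ m ∈ Finset.range (N + 1),
        poch a m * poch ((1 - (N : ℝ)) / 2) m * poch (-(N : ℝ) / 2) m /
          ((Nat.factorial m) * poch e m * poch (1 - N - e) m)
      = ∑ m ∈ Finset.range (N+1), ((2:ℝ)^N)⁻¹ / poch e N * gt N a e m := by
        refine Finset.sum_congr rfl fun m hm => ?_
        have hm' : m ≤ N := by simp only [Finset.mem_range] at hm; omega
        exact term_lhs N a e m hm' heN (he m hm') (he' m hm')
    _ = ((2:ℝ)^N)⁻¹ / poch e N * gsum N a e := by rw [gsum, Finset.mul_sum]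
    _ = ((2:ℝ)^N)⁻¹ / poch e N * fsum N a e := by rw [gfeq]
    _ = ∑ s ∈ Finset.range (N+1), ((2:ℝ)^N)⁻¹ / poch e N *
          ((N.choose s : ℝ) * poch (a+e+(N:ℝ)-s) s * poch (e-a) (N-s)) := by
        rw [fsum, Finset.mul_sum]
    _ = ∑ s ∈ Finset.range (N+1),
          (2 : ℝ) ^ (-(N : ℤ)) * poch (e - a) N / poch e N *
            (poch (1 - a - e - N) s * poch (-(N : ℝ)) s * (-1) ^ s /
              ((Nat.factorial s) * poch (1 + a - e - N) s)) := by
        refine Finset.sum_congr rfl fun s hs => ?_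
        have hs' : s ≤ N := by simp only [Finset.mem_range] at hs; omega
        exact (term_rhs N a e s hs' heN (he'' s hs')).symm
    _ = (2 : ℝ) ^ (-(N : ℤ)) * poch (e - a) N / poch e N *
        ∑ s ∈ Finset.range (N + 1),
          poch (1 - a - e - N) s * poch (-(N : ℝ)) s * (-1) ^ s /
            ((Nat.factorial s) * poch (1 + a - e - N) s) := by
        rw [Finset.mul_sum]
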